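/- arXiv:2603.20759 — 4 statements merged into one kernel-verified Lean document; each statement's English description precedes it below -/
import Mathlib

section
/- Let θ ∈ (0,1), ζ̄ ≥ 0, and consider sequences {ζ_k} and {α̃_k} of positive reals satisfying: α̃₀³ ≥ ζ₀, ζ₀ ≥ ζ̄, and at each step k either (a) ζ_{k+1} = max{ζ̄, min{θ·ζ_k, α̃_{k+1}³}} with α̃_{k+1} ≤ α̃_k (unsuccessful update with refinement), or (b) ζ_{k+1} = ζ_k with α̃_{k+1} ≤ α̃_k (unsuccessful without refinement, occurring only when α̃_{k+1}³ ≥ ζ_k), or (c) ζ_{k+1} = ζ_k with α̃_{k+1} ≥ α̃_k (successful update). Then: if ζ_{k̄} = ζ̄ for some k̄, then ζ_k = ζ̄ for all k ≥ k̄; and if ζ_k > ζ̄ for all k ≥ 1, then ζ_k ≤ min{ζ_{k−1}, α̃_k³} for all k ≥ 1. -/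
open Filter Topology

theorem stmt2 (θ ζbar : ℝ) (hθ : θ ∈ Set.Ioo (0:ℝ) 1) (hζbar : 0 ≤ ζbar)
    (ζ αt : ℕ → ℝ)
    (hζpos : ∀ k, 0 < ζ k) (hαtpos : ∀ k, 0 < αt k)
    (hinit : ζ 0 ≤ (αt 0) ^ 3) (hinit2 : ζbar ≤ ζ 0)
    (hstep : ∀ k,
      (ζ (k+1) = max ζbar (min (θ * ζ k) ((αt (k+1)) ^ 3)) ∧ αt (k+1) ≤ αt k) ∨
      (ζ (k+1) = ζ k ∧ αt (k+1) ≤ αt k ∧ ζ k ≤ (αt (k+1)) ^ 3) ∨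
      (ζ (k+1) = ζ k ∧ αt k ≤ αt (k+1))) :
    (∀ kbar, ζ kbar = ζbar → ∀ k, kbar ≤ k → ζ k = ζbar) ∧
    ((∀ k, 1 ≤ k → ζbar < ζ k) →
      ∀ k, 1 ≤ k → ζ k ≤ min (ζ (k - 1)) ((αt k) ^ 3)) := by
  obtain ⟨hθ0, hθ1⟩ := hθ
  constructor
  · intro kbar hkbar k hk
    induction k with
    | zero =>
      interval_cases kbar
      exact hkbar
    | succ n ih =>
      rcases Nat.lt_or_ge kbar (n+1) with h | h
      · have hn : ζ n = ζbar := ih (Nat.lt_succ_iff.mp h)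
        rcases hstep n with ⟨h1, _⟩ | ⟨h1, _, _⟩ | ⟨h1, _⟩
        · rw [h1, hn]
          have : min (θ * ζbar) ((αt (n+1)) ^ 3) ≤ ζbar := by
            calc min (θ * ζbar) ((αt (n+1)) ^ 3) ≤ θ * ζbar := min_le_left _ _
            _ ≤ 1 * ζbar := by nlinarith
            _ = ζbar := one_mul _
          exact max_eq_left this
        · rw [h1, hn]
        · rw [h1, hn]
      · have : kbar = n + 1 := le_antisymm hk h
        rw [← this]; exact hkbar
  · intro hgt
    have haux : ∀ k, ζ k ≤ (αt k) ^ 3 := by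
      intro k
      induction k with
      | zero => exact hinit
      | succ n ih =>
        rcases hstep n with ⟨h1, _⟩ | ⟨h1, _, h3⟩ | ⟨h1, h2⟩
        · rw [h1]
          have hm : ζbar < max ζbar (min (θ * ζ n) ((αt (n+1)) ^ 3)) := by
            rw [← h1]; exact hgt (n+1) (Nat.le_add_left 1 n)
          rcases max_cases ζbar (min (θ * ζ n) ((αt (n+1)) ^ 3)) with ⟨he, _⟩ | ⟨he, _⟩
          · rw [he] at hm; exact absurd hm (lt_irrefl _)
          · rw [he]; exact min_le_right _ _
        · rw [h1]; exact h3
        · rw [h1]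
          calc ζ n ≤ (αt n) ^ 3 := ih
          _ ≤ (αt (n+1)) ^ 3 := pow_le_pow_left₀ (hαtpos n).le h2 3
    intro k hk
    obtain ⟨n, rfl⟩ := Nat.exists_eq_add_of_le hk
    simp only [Nat.add_sub_cancel_left] -- maybe wrong form; fix below
    refine le_min ?_ (haux _)
    have h1n : 1 + n = n + 1 := by omega
    rw [h1n]
    rcases hstep n with ⟨h1, _⟩ | ⟨h1, _, _⟩ | ⟨h1, _⟩
    · rw [h1]
      have hm : ζbar < max ζbar (min (θ * ζ n) ((αt (n+1)) ^ 3)) := by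
        rw [← h1]; exact hgt (n+1) (Nat.le_add_left 1 n)
      rcases max_cases ζbar (min (θ * ζ n) ((αt (n+1)) ^ 3)) with ⟨he, _⟩ | ⟨he, _⟩
      · rw [he] at hm; exact absurd hm (lt_irrefl _)
      · rw [he]
        calc min (θ * ζ n) ((αt (n+1)) ^ 3) ≤ θ * ζ n := min_le_left _ _
        _ ≤ 1 * ζ n := by nlinarith [hζpos n]
        _ = ζ n := one_mul _
    · rw [h1]
    · rw [h1]
end

section
/- Let γ ∈ (0,1) and L ≥ 1 (so γ < 2L), and let {a_k} be a sequence of nonnegative reals and {z_k} a sequence of positive reals with z_k → 0. Suppose {V_k} is a real sequence bounded below such that V_{k+1} ≤ V_k + 2L·min{z_{k−1}, a_k³} − γ·a_k² for all k in an infinite index set 𝒮, and V_{k+1} = V_k otherwise. Then lim_{k→∞, k∈𝒮} a_k = 0. -/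
open Filter Topology

theorem stmt5 (γ L : ℝ) (hγ : γ ∈ Set.Ioo (0:ℝ) 1) (hL : 1 ≤ L)
    (a : ℕ → ℝ) (ha : ∀ k, 0 ≤ a k)
    (z : ℕ → ℝ) (hzpos : ∀ k, 0 < z k) (hz : Tendsto z atTop (𝓝 0))
    (V : ℕ → ℝ) (B : ℝ) (hB : ∀ k, B ≤ V k)
    (S : Set ℕ) (hS : S.Infinite)
    (hdec : ∀ k ∈ S, V (k+1) ≤ V k + 2 * L * min (z (k-1)) ((a k) ^ 3) - γ * (a k) ^ 2)
    (heq : ∀ k ∉ S, V (k+1) = V k) :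
    Tendsto a (atTop ⊓ 𝓟 S) (𝓝 0) := by
  obtain ⟨hγ0, hγ1⟩ := hγ
  have hL0 : (0:ℝ) < 2 * L := by linarith
  set t : ℝ := γ / (2 * L) with ht
  have ht0 : 0 < t := div_pos hγ0 hL0
  have htγ : 2 * L * t = γ := by rw [ht]; field_simp
  have hc : (0:ℝ) < t ^ 3 := by positivity
  -- eventually z k < t^3
  obtain ⟨N, hN⟩ := eventually_atTop.mp (hz.eventually_lt_const hc)
  -- V is nonincreasing for k ≥ N+1
  have hmono : ∀ k, N + 1 ≤ k → V (k + 1) ≤ V k := by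
    intro k hk
    by_cases hkS : k ∈ S
    · have hz' : z (k - 1) < t ^ 3 := hN (k - 1) (by omega)
      have hz'' : 0 < z (k - 1) := hzpos _
      have key : 2 * L * min (z (k-1)) ((a k) ^ 3) ≤ γ * (a k) ^ 2 := by
        by_cases hma : (a k) ^ 3 ≤ z (k - 1)
        · rw [min_eq_right hma]
          have hat : a k < t := by
            have : (a k) ^ 3 < t ^ 3 := lt_of_le_of_lt hma hz'
            exact lt_of_pow_lt_pow_left₀ 3 (le_of_lt ht0) this
          nlinarith [mul_le_mul_of_nonneg_left hat.le (sq_nonneg (a k)), hL0]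
        · push_neg at hma
          rw [min_eq_left (le_of_lt hma)]
          have hza : (z (k-1)) ^ 2 ≤ ((a k) ^ 3) ^ 2 := by nlinarith [hz'']
          have h1 : z (k-1) * (z (k-1)) ^ 2 < t ^ 3 * ((a k) ^ 3) ^ 2 :=
            lt_of_lt_of_le (mul_lt_mul_of_pos_right hz' (pow_pos hz'' 2))
              (mul_le_mul_of_nonneg_left hza (le_of_lt hc))
          have h1' : (z (k-1)) ^ 3 < (t * (a k) ^ 2) ^ 3 := by nlinarith [h1]
          have h2 : z (k-1) < t * (a k) ^ 2 :=
            lt_of_pow_lt_pow_left₀ 3 (by positivity) h1'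
          nlinarith [h2, hL0]
      have := hdec k hkS
      linarith
    · exact le_of_eq (heq k hkS)
  -- shifted sequence is antitone and bounded below, hence converges
  have hanti : Antitone (fun k => V (k + (N + 1))) := by
    apply antitone_nat_of_succ_le
    intro n
    have := hmono (n + (N + 1)) (by omega)
    simpa [add_assoc, add_comm, add_left_comm] using this
  have hbdd : BddBelow (Set.range (fun k => V (k + (N + 1)))) := by
    refine ⟨B, ?_⟩
    rintro x ⟨k, rfl⟩
    exact hB _
  obtain ⟨ℓ, hℓ⟩ : ∃ ℓ, Tendsto (fun k => V (k + (N + 1))) atTop (𝓝 ℓ) :=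
    ⟨_, tendsto_atTop_ciInf hanti hbdd⟩
  have hV : Tendsto V atTop (𝓝 ℓ) := (tendsto_add_atTop_iff_nat (N + 1)).mp hℓ
  have hV1 : Tendsto (fun k => V (k + 1)) atTop (𝓝 ℓ) :=
    (tendsto_add_atTop_iff_nat 1).mpr hV
  have hdiff : Tendsto (fun k => V k - V (k + 1)) atTop (𝓝 0) := by
    simpa using hV.sub hV1
  have hzshift : Tendsto (fun k => z (k - 1)) atTop (𝓝 0) :=
    hz.comp (tendsto_sub_atTop_nat 1)
  -- upper bound sequence
  have hg : Tendsto (fun k => (V k - V (k + 1) + 2 * L * z (k - 1)) / γ) atTop (𝓝 0) := by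
    have := (hdiff.add (hzshift.const_mul (2 * L))).div_const γ
    simpa using this
  have hsq : Tendsto (fun k => (a k) ^ 2) (atTop ⊓ 𝓟 S) (𝓝 0) := by
    apply tendsto_of_tendsto_of_tendsto_of_le_of_le'
      (tendsto_const_nhds) (hg.mono_left inf_le_left)
    · exact Filter.Eventually.of_forall fun k => sq_nonneg _
    · rw [eventually_inf_principal]
      apply Filter.Eventually.of_forall
      intro k hkS
      have hd := hdec k hkS
      have hmin : min (z (k-1)) ((a k) ^ 3) ≤ z (k-1) := min_le_left _ _
      rw [le_div_iff₀ hγ0]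
      nlinarith
  have hsqrt : Tendsto (fun k => Real.sqrt ((a k) ^ 2)) (atTop ⊓ 𝓟 S) (𝓝 0) := by
    have := (Real.continuous_sqrt.tendsto 0).comp hsq
    simpa [Function.comp_def] using this
  refine hsqrt.congr ?_
  intro k
  rw [Real.sqrt_sq (ha k)]
end

section
/- Let X = {x ∈ ℝⁿ : l ≤ x ≤ u} (componentwise, with l < u) and let [·]_{[l,u]} denote the componentwise projection onto X. Let {x_k} ⊂ X, {d_k} ⊂ ℝⁿ, and {η_k} with η_k > 0, and suppose along an infinite index set K: x_k → x̄ ∈ X, d_k → d̄, η_k → 0, where d̄ ≠ 0 belongs to the cone of feasible directions D(x̄) = {d : d_i ≥ 0 if x̄_i = l_i, d_i ≤ 0 if x̄_i = u_i}. Then (i) for all k ∈ K sufficiently large, [x_k + η_k d_k]_{[l,u]} ≠ x_k, and (ii) lim_{k→∞, k∈K} ([x_k + η_k d_k]_{[l,u]} − x_k)/η_k = d̄. -/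
open Filter Topology

lemma max_aux {F : Filter ℕ} {a m : ℕ → ℝ} {L : ℝ}
    (hm : Tendsto m F (𝓝 L))
    (h : ((∀ᶠ k in F, a k ≤ 0) ∧ 0 ≤ L) ∨ Tendsto a F atBot) :
    Tendsto (fun k => max (a k) (m k)) F (𝓝 L) := by
  rcases h with ⟨ha, hL⟩ | ha
  · have h1 : Tendsto (fun k => max 0 (m k)) F (𝓝 (max 0 L)) :=
      tendsto_const_nhds.max hm
    rw [max_eq_right hL] at h1
    refine tendsto_of_tendsto_of_tendsto_of_le_of_le' hm h1 ?_ ?_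
    · exact Eventually.of_forall fun k => le_max_right _ _
    · exact ha.mono fun k hk => max_le_max hk le_rfl
  · have h1 : ∀ᶠ k in F, a k ≤ L - 1 := ha.eventually (eventually_le_atBot _)
    have h2 : ∀ᶠ k in F, L - 1 ≤ m k :=
      hm.eventually (eventually_ge_nhds (by linarith))
    refine hm.congr' ?_
    filter_upwards [h1, h2] with k hk1 hk2
    exact (max_eq_right (hk1.trans hk2)).symm

lemma min_aux {F : Filter ℕ} {b m : ℕ → ℝ} {L : ℝ}
    (hm : Tendsto m F (𝓝 L))
    (h : ((∀ᶠ k in F, 0 ≤ b k) ∧ L ≤ 0) ∨ Tendsto b F atTop) :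
    Tendsto (fun k => min (b k) (m k)) F (𝓝 L) := by
  have := max_aux (F := F) (a := fun k => -(b k)) (m := fun k => -(m k)) (L := -L)
    hm.neg ?_
  · have := this.neg
    simp only [neg_neg] at this
    refine this.congr fun k => ?_
    rw [max_neg_neg, neg_neg]
  · rcases h with ⟨hb, hL⟩ | hb
    · exact Or.inl ⟨hb.mono fun k hk => neg_nonpos.mpr hk, by linarith⟩
    · exact Or.inr (tendsto_neg_atTop_atBot.comp hb)

lemma key_id (l u x e d : ℝ) (he : 0 < e) :
    (max l (min u (x + e * d)) - x) / e =
      max ((l - x) / e) (min ((u - x) / e) d) := by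
  rw [← max_sub_sub_right, ← min_sub_sub_right, add_sub_cancel_left]
  conv_rhs => rw [← mul_div_cancel_left₀ d he.ne']
  rw [min_div_div_right he.le, max_div_div_right he.le]

theorem stmt7 {n : ℕ} (l u : Fin n → ℝ) (hlu : ∀ i, l i < u i)
    (x d : ℕ → Fin n → ℝ) (η : ℕ → ℝ) (hη : ∀ k, 0 < η k)
    (K : Set ℕ) (hK : K.Infinite)
    (xbar dbar : Fin n → ℝ)
    (hxX : ∀ k i, l i ≤ x k i ∧ x k i ≤ u i)
    (hxbarX : ∀ i, l i ≤ xbar i ∧ xbar i ≤ u i)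
    (hxlim : Tendsto x (atTop ⊓ 𝓟 K) (𝓝 xbar))
    (hdlim : Tendsto d (atTop ⊓ 𝓟 K) (𝓝 dbar))
    (hηlim : Tendsto η (atTop ⊓ 𝓟 K) (𝓝 0))
    (hdbar : dbar ≠ 0)
    (hfeas : ∀ i, (xbar i = l i → 0 ≤ dbar i) ∧ (xbar i = u i → dbar i ≤ 0)) :
    (∀ᶠ k in atTop ⊓ 𝓟 K,
        (fun i => max (l i) (min (u i) (x k i + η k * d k i))) ≠ x k) ∧
    Tendsto
      (fun k => fun i => (max (l i) (min (u i) (x k i + η k * d k i)) - x k i) / η k)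
      (atTop ⊓ 𝓟 K) (𝓝 dbar) := by
  set F := atTop ⊓ 𝓟 K with hF
  -- inverse of η tends to atTop
  have hηinv : Tendsto (fun k => (η k)⁻¹) F atTop := by
    refine tendsto_inv_nhdsGT_zero.comp ?_
    rw [tendsto_nhdsWithin_iff]
    exact ⟨hηlim, Eventually.of_forall fun k => hη k⟩
  have hxi : ∀ i, Tendsto (fun k => x k i) F (𝓝 (xbar i)) := fun i =>
    (continuous_apply i).continuousAt.tendsto.comp hxlim
  have hdi : ∀ i, Tendsto (fun k => d k i) F (𝓝 (dbar i)) := fun i =>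
    (continuous_apply i).continuousAt.tendsto.comp hdlim
  -- the main limit
  have main : Tendsto
      (fun k => fun i => (max (l i) (min (u i) (x k i + η k * d k i)) - x k i) / η k)
      F (𝓝 dbar) := by
    rw [tendsto_pi_nhds]
    intro i
    have hcongr : ∀ k, (max (l i) (min (u i) (x k i + η k * d k i)) - x k i) / η k =
        max ((l i - x k i) / η k) (min ((u i - x k i) / η k) (d k i)) := fun k =>
      key_id _ _ _ _ _ (hη k)
    simp only [hcongr]
    have hmin : Tendsto (fun k => min ((u i - x k i) / η k) (d k i)) F (𝓝 (dbar i)) := by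
      refine min_aux (hdi i) ?_
      rcases eq_or_lt_of_le (hxbarX i).2 with hb | hb
      · refine Or.inl ⟨Eventually.of_forall fun k => ?_, (hfeas i).2 hb⟩
        exact div_nonneg (by linarith [(hxX k i).2]) (hη k).le
      · refine Or.inr ?_
        have h1 : Tendsto (fun k => u i - x k i) F (𝓝 (u i - xbar i)) :=
          tendsto_const_nhds.sub (hxi i)
        have := h1.pos_mul_atTop (by linarith) hηinv
        exact this.congr fun k => (div_eq_mul_inv _ _).symm
    refine max_aux hmin ?_
    rcases eq_or_lt_of_le (hxbarX i).1 with hb | hb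
    · refine Or.inl ⟨Eventually.of_forall fun k => ?_, (hfeas i).1 hb.symm⟩
      exact div_nonpos_of_nonpos_of_nonneg (by linarith [(hxX k i).1]) (hη k).le
    · refine Or.inr ?_
      have h1 : Tendsto (fun k => l i - x k i) F (𝓝 (l i - xbar i)) :=
        tendsto_const_nhds.sub (hxi i)
      have := h1.neg_mul_atTop (by linarith) hηinv
      exact this.congr fun k => (div_eq_mul_inv _ _).symm
  refine ⟨?_, main⟩
  obtain ⟨i, hi⟩ := Function.ne_iff.mp hdbar
  have : ∀ᶠ k in F,
      (max (l i) (min (u i) (x k i + η k * d k i)) - x k i) / η k ≠ 0 := by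
    have := (tendsto_pi_nhds.mp main i)
    exact this.eventually_ne hi
  filter_upwards [this] with k hk hEq
  apply hk
  have : max (l i) (min (u i) (x k i + η k * d k i)) = x k i := congrFun hEq i
  rw [this, sub_self, zero_div]
end

section
/- Let F̄ : ℝⁿ → ℝ be Lipschitz with constant L_{F̄}, let X be a box, x̄ ∈ X, and d̄ ∈ D(x̄) with ‖d̄‖ = 1. Suppose there exist sequences x_k → x̄ with x_k ∈ X, v_k → d̄, η_k ↓ 0 with x_k + η_k v_k ∈ X, and a sequence ε_k → 0 such that F̄(x_k + η_k v_k) − F̄(x_k) ≥ −ε_k·η_k for all k. Then the Clarke–Jahn generalized directional derivative satisfies F̄°(x̄; d̄) ≥ 0, where F̄°(x̄; d̄) = limsup_{x→x̄, t↓0, x∈X, x+td̄∈X} (F̄(x + t·d̄) − F̄(x))/t. -/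
open Filter Topology

theorem stmt9 {n : ℕ} (Fb : EuclideanSpace ℝ (Fin n) → ℝ) (LFb : ℝ)
    (hLip : ∀ a b, |Fb a - Fb b| ≤ LFb * ‖a - b‖)
    (l u : EuclideanSpace ℝ (Fin n))
    (X : Set (EuclideanSpace ℝ (Fin n)))
    (hX : X = {x | ∀ i, l i ≤ x i ∧ x i ≤ u i})
    (xbar : EuclideanSpace ℝ (Fin n)) (hxbar : xbar ∈ X)
    (dbar : EuclideanSpace ℝ (Fin n)) (hdnorm : ‖dbar‖ = 1)
    (hdfeas : ∀ i, (xbar i = l i → 0 ≤ dbar i) ∧ (xbar i = u i → dbar i ≤ 0))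
    (x v : ℕ → EuclideanSpace ℝ (Fin n)) (η ε : ℕ → ℝ)
    (hxX : ∀ k, x k ∈ X) (hηpos : ∀ k, 0 < η k)
    (hxv : ∀ k, x k + η k • v k ∈ X)
    (hxlim : Tendsto x atTop (𝓝 xbar))
    (hvlim : Tendsto v atTop (𝓝 dbar))
    (hηlim : Tendsto η atTop (𝓝 0))
    (hεlim : Tendsto ε atTop (𝓝 0))
    (hεpos : ∀ k, 0 ≤ ε k)
    (hineq : ∀ k, Fb (x k + η k • v k) - Fb (x k) ≥ -(ε k) * η k) :
    0 ≤ Filter.limsup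
        (fun p : EuclideanSpace ℝ (Fin n) × ℝ =>
          (Fb (p.1 + p.2 • dbar) - Fb p.1) / p.2)
        ((𝓝 xbar ×ˢ 𝓝[>] (0:ℝ)) ⊓ 𝓟 {p | p.1 ∈ X ∧ p.1 + p.2 • dbar ∈ X}) := by
  set f := (fun p : EuclideanSpace ℝ (Fin n) × ℝ =>
      (Fb (p.1 + p.2 • dbar) - Fb p.1) / p.2) with hf
  set L := (𝓝 xbar ×ˢ 𝓝[>] (0:ℝ)) ⊓ 𝓟 {p | p.1 ∈ X ∧ p.1 + p.2 • dbar ∈ X} with hL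
  -- LFb is nonnegative
  have hLFb : 0 ≤ LFb := by
    have h := hLip dbar 0
    simp only [sub_zero, hdnorm, mul_one] at h
    exact le_trans (abs_nonneg _) h
  -- boundedness above of f along L
  have hpos_ev : ∀ᶠ p : EuclideanSpace ℝ (Fin n) × ℝ in L, 0 < p.2 := by
    have h1 : {p : EuclideanSpace ℝ (Fin n) × ℝ | 0 < p.2} ∈
        (𝓝 xbar ×ˢ 𝓝[>] (0:ℝ)) := by
      have : Set.Ioi (0:ℝ) ∈ 𝓝[>] (0:ℝ) := self_mem_nhdsWithin
      exact mem_prod_iff.mpr ⟨Set.univ, univ_mem, Set.Ioi 0, this, by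
        intro p hp; exact hp.2⟩
    exact mem_inf_of_left h1
  have hbdd : IsBoundedUnder (· ≤ ·) L f := by
    refine ⟨LFb, ?_⟩
    rw [eventually_map]
    filter_upwards [hpos_ev] with p hp
    have h := hLip (p.1 + p.2 • dbar) p.1
    have heq : (p.1 + p.2 • dbar) - p.1 = p.2 • dbar := by abel
    rw [heq, norm_smul, hdnorm, mul_one, Real.norm_eq_abs, abs_of_pos hp] at h
    have hle : Fb (p.1 + p.2 • dbar) - Fb p.1 ≤ LFb * p.2 :=
      le_trans (le_abs_self _) h
    rw [hf]
    exact div_le_of_le_mul₀ (le_of_lt hp) hLFb (by linarith [mul_comm LFb p.2])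
  -- the sequence of pairs
  set p : ℕ → EuclideanSpace ℝ (Fin n) × ℝ := fun k => (x k, η k) with hp
  -- coordinate convergence
  have hxi : ∀ i, Tendsto (fun k => x k i) atTop (𝓝 (xbar i)) := fun i =>
    ((EuclideanSpace.proj i).continuous.tendsto xbar).comp hxlim
  -- feasibility of x k + η k • dbar eventually
  have hfeas : ∀ᶠ k in atTop, x k + η k • dbar ∈ X := by
    rw [hX]
    have hall : ∀ i : Fin n, ∀ᶠ k in atTop,
        l i ≤ (x k + η k • dbar) i ∧ (x k + η k • dbar) i ≤ u i := by
      intro i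
      have happ : ∀ k, (x k + η k • dbar) i = x k i + η k * dbar i := by
        intro k; simp [PiLp.add_apply, PiLp.smul_apply, smul_eq_mul]
      have hti : Tendsto (fun k => x k i + η k * dbar i) atTop (𝓝 (xbar i)) := by
        have := (hxi i).add ((hηlim.mul_const (dbar i)))
        simpa using this
      have hxbl : l i ≤ xbar i ∧ xbar i ≤ u i := by
        rw [hX] at hxbar; exact hxbar i
      have hxkX : ∀ k, l i ≤ x k i ∧ x k i ≤ u i := by
        intro k; have := hxX k; rw [hX] at this; exact this i
      rcases lt_trichotomy (dbar i) 0 with hd | hd | hd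
      · -- dbar i < 0 : upper bound automatic; need lower bound eventually
        have hne : xbar i ≠ l i := by
          intro h; exact absurd ((hdfeas i).1 h) (not_le.mpr hd)
        have hlt : l i < xbar i := lt_of_le_of_ne hxbl.1 (Ne.symm hne)
        have hev : ∀ᶠ k in atTop, l i < x k i + η k * dbar i :=
          hti.eventually (eventually_gt_nhds hlt)
        filter_upwards [hev] with k hk
        rw [happ k]
        refine ⟨le_of_lt hk, ?_⟩
        have : η k * dbar i ≤ 0 :=
          mul_nonpos_of_nonneg_of_nonpos (le_of_lt (hηpos k)) (le_of_lt hd)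
        linarith [(hxkX k).2]
      · -- dbar i = 0
        filter_upwards with k
        rw [happ k, hd, mul_zero, add_zero]
        exact hxkX k
      · -- dbar i > 0
        have hne : xbar i ≠ u i := by
          intro h; exact absurd ((hdfeas i).2 h) (not_le.mpr hd)
        have hlt : xbar i < u i := lt_of_le_of_ne hxbl.2 hne
        have hev : ∀ᶠ k in atTop, x k i + η k * dbar i < u i :=
          hti.eventually (eventually_lt_nhds hlt)
        filter_upwards [hev] with k hk
        rw [happ k]
        refine ⟨?_, le_of_lt hk⟩
        have : 0 ≤ η k * dbar i :=
          mul_nonneg (le_of_lt (hηpos k)) (le_of_lt hd)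
        linarith [(hxkX k).1]
    exact (eventually_all.mpr hall)
  -- the sequence p tends to L
  have hptend : Tendsto p atTop L := by
    rw [hL]
    refine tendsto_inf.mpr ⟨?_, ?_⟩
    · refine Tendsto.prodMk hxlim ?_
      rw [tendsto_nhdsWithin_iff]
      exact ⟨hηlim, Eventually.of_forall fun k => hηpos k⟩
    · rw [tendsto_principal]
      filter_upwards [hfeas] with k hk
      exact ⟨hxX k, hk⟩
  -- lower bound for f (p k)
  set c : ℕ → ℝ := fun k => -(ε k) - LFb * ‖v k - dbar‖ with hc
  have hclim : Tendsto c atTop (𝓝 0) := by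
    have h1 : Tendsto (fun k => ‖v k - dbar‖) atTop (𝓝 0) := by
      have := (hvlim.sub (tendsto_const_nhds (x := dbar))).norm
      simpa using this
    have := (hεlim.neg).sub ((h1.const_mul LFb))
    simpa using this
  have hkey : ∀ k, c k ≤ f (p k) := by
    intro k
    have hη := hηpos k
    have hfval : f (p k) = (Fb (x k + η k • dbar) - Fb (x k)) / η k := rfl
    rw [hfval, le_div_iff₀ hη]
    have h1 := hineq k
    have h2 : |Fb (x k + η k • v k) - Fb (x k + η k • dbar)| ≤
        LFb * (η k * ‖v k - dbar‖) := by
      have h := hLip (x k + η k • v k) (x k + η k • dbar)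
      have heq : (x k + η k • v k) - (x k + η k • dbar) = η k • (v k - dbar) := by
        rw [smul_sub]; abel
      rw [heq, norm_smul, Real.norm_eq_abs, abs_of_pos hη] at h
      linarith [h]
    have h2' : Fb (x k + η k • v k) - Fb (x k + η k • dbar) ≤
        LFb * (η k * ‖v k - dbar‖) := le_trans (le_abs_self _) h2
    have hck : c k * η k = -(ε k) * η k - LFb * (η k * ‖v k - dbar‖) := by
      rw [hc]; ring
    linarith
  -- conclude
  by_contra hcon
  push_neg at hcon
  set a := limsup f L / 2 with ha
  have ha0 : a < 0 := by rw [ha]; linarith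
  have haL : limsup f L < a := by rw [ha]; linarith
  have hev : ∀ᶠ k in atTop, a < c k := hclim.eventually (eventually_gt_nhds ha0)
  have hfreq : ∃ᶠ q in L, a ≤ f q := by
    have h1 : ∃ᶠ k in atTop, a ≤ f (p k) := by
      refine Eventually.frequently ?_
      filter_upwards [hev] with k hk
      exact le_trans (le_of_lt hk) (hkey k)
    have h2 : ∃ᶠ q in map p atTop, a ≤ f q := by
      rwa [frequently_map]
    exact h2.filter_mono hptend
  have := le_limsup_of_frequently_le hfreq hbdd
  linarith
end
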